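/- Let L be a timed language definable by a K-acceptor. Then the equivalence ≈^{L,K} has finite index and is K-monotonic; moreover, ≈^{L,K} is the coarsest K-monotonic, L-preserving equivalence, i.e., every K-monotonic, L-preserving equivalence ≈ satisfies: u ≈ v implies u ≈^{L,K} v. -/

import Mathlib

open scoped NNReal Classical

namespace IRTA

/-- A timestamp is a finite sequence of non-negative reals. -/
abbrev Timestamp : Type := List ℝ≥0

/-- A timed word is a finite sequence of (delay, letter) pairs. -/
abbrev TimedWord (A : Type) : Type := List (ℝ≥0 × A)

/-- Fractional part of a non-negative real. -/
noncomputable def fracPart (x : ℝ≥0) : ℝ≥0 := x - (⌊x⌋₊ : ℝ≥0)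

/-- `x` is a natural-number value. -/
def IsNatVal (x : ℝ≥0) : Prop := ∃ m : ℕ, x = (m : ℝ≥0)

/-- Region equivalence `≡^K`. -/
def RegEq (K : ℕ) (x y : ℝ≥0) : Prop :=
  (⌊x⌋₊ = ⌊y⌋₊ ∧ (fracPart x = 0 ↔ fracPart y = 0)) ∨ ((K : ℝ≥0) < x ∧ (K : ℝ≥0) < y)

/-- One step of the (greedy) clock evolution: reset whenever the value is an
integer between `0` and `K`. -/
noncomputable def resetStep (K : ℕ) (v : ℝ≥0) : ℝ≥0 :=
  if ∃ m : ℕ, m ≤ K ∧ v = (m : ℝ≥0) then 0 else v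

/-- Auxiliary function computing `c^K` with accumulator `v`. -/
noncomputable def cKAux (K : ℕ) : ℝ≥0 → Timestamp → ℝ≥0
  | v, [] => v
  | v, t :: d => cKAux K (resetStep K (v + t)) d

/-- `c^K(d)`: the sum of the delays after the last integral position of `d`. -/
noncomputable def cK (K : ℕ) (d : Timestamp) : ℝ≥0 := cKAux K 0 d

/-- `c^K` of a timed word is `c^K` of its timestamp. -/
noncomputable def cKW {A : Type} (K : ℕ) (w : TimedWord A) : ℝ≥0 :=
  cK K (w.map Prod.fst)

/-- `c^K_⊤` : `c^K` truncated at `K`. -/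
noncomputable def cKTop {A : Type} (K : ℕ) (w : TimedWord A) : WithTop ℝ≥0 :=
  if cKW K w ≤ (K : ℝ≥0) then ((cKW K w : ℝ≥0) : WithTop ℝ≥0) else ⊤

/-! ### Clock constraints and one-clock timed automata -/

/-- Clock constraints `φ ::= x < m | m < x | x = m | φ ∧ φ`. -/
inductive CC : Type where
  | lt : ℕ → CC
  | gt : ℕ → CC
  | eq : ℕ → CC
  | and : CC → CC → CC

/-- Satisfaction of a clock constraint by a clock value. -/
def CC.sat : CC → ℝ≥0 → Prop
  | .lt m, x => x < (m : ℝ≥0)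
  | .gt m, x => (m : ℝ≥0) < x
  | .eq m, x => x = (m : ℝ≥0)
  | .and φ ψ, x => φ.sat x ∧ ψ.sat x

/-- The largest constant appearing in a clock constraint. -/
def CC.maxConst : CC → ℕ
  | .lt m => m
  | .gt m => m
  | .eq m => m
  | .and φ ψ => max φ.maxConst ψ.maxConst

/-- A transition of a one-clock timed automaton; `reset = true` means the
clock is reset (the `r = 0` case). -/
structure TTrans (Q A : Type) where
  src : Q
  dst : Q
  lab : A
  guard : CC
  reset : Bool

/-- A one-clock timed automaton. -/
structure TA (A : Type) where
  Q : Type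
  init : Q
  final : Set Q
  trans : Set (TTrans Q A)

/-- The automaton has finitely many states and transitions. -/
def TA.IsFinite {A : Type} (M : TA A) : Prop := Finite M.Q ∧ M.trans.Finite

/-- Runs of a one-clock timed automaton between configurations. -/
inductive Steps {A : Type} (M : TA A) : M.Q × ℝ≥0 → TimedWord A → M.Q × ℝ≥0 → Prop
  | nil (c : M.Q × ℝ≥0) : Steps M c [] c
  | cons {q : M.Q} {ν t : ℝ≥0} {a : A} {w : TimedWord A} {c : M.Q × ℝ≥0}
      (θ : TTrans M.Q A) (hθ : θ ∈ M.trans) (hsrc : θ.src = q) (hlab : θ.lab = a)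
      (hg : θ.guard.sat (ν + t))
      (hrest : Steps M (θ.dst, if θ.reset then 0 else ν + t) w c) :
      Steps M (q, ν) ((t, a) :: w) c

/-- The language of `M` from a given configuration. -/
def TA.LangFrom {A : Type} (M : TA A) (c : M.Q × ℝ≥0) : Set (TimedWord A) :=
  {w | ∃ q' : M.Q, ∃ ν' : ℝ≥0, Steps M c w (q', ν') ∧ q' ∈ M.final}

/-- The language of `M` (from the initial configuration). -/
def TA.Lang {A : Type} (M : TA A) : Set (TimedWord A) := M.LangFrom (M.init, 0)

/-- Determinism: distinct transitions with the same source and letter have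
disjoint guards. -/
def TA.Deterministic {A : Type} (M : TA A) : Prop :=
  ∀ θ₁ ∈ M.trans, ∀ θ₂ ∈ M.trans, θ₁ ≠ θ₂ → θ₁.src = θ₂.src → θ₁.lab = θ₂.lab →
    ∀ x : ℝ≥0, ¬ (θ₁.guard.sat x ∧ θ₂.guard.sat x)

/-- Completeness: every timed word admits a run from the initial configuration. -/
def TA.Complete {A : Type} (M : TA A) : Prop :=
  ∀ w : TimedWord A, ∃ c : M.Q × ℝ≥0, Steps M (M.init, 0) w c

/-- A 1-IRTA: every resetting transition has an equality guard. -/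
def TA.IsIRTA {A : Type} (M : TA A) : Prop :=
  ∀ θ ∈ M.trans, θ.reset = true → ∃ m : ℕ, θ.guard = CC.eq m

/-- Guards allowed in a strict 1-IRTA with constant `K`. -/
def StrictGuard (K : ℕ) (φ : CC) : Prop :=
  (∃ m : ℕ, φ = CC.eq m) ∨ (∃ m : ℕ, φ = CC.and (CC.gt m) (CC.lt (m + 1))) ∨ φ = CC.gt K

/-- Strictness with constant `K`: every guard is of one of the allowed forms
and a guard is an equality iff the transition resets. -/
def TA.IsStrict {A : Type} (M : TA A) (K : ℕ) : Prop :=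
  ∀ θ ∈ M.trans, StrictGuard K θ.guard ∧ ((∃ m : ℕ, θ.guard = CC.eq m) ↔ θ.reset = true)

/-- All constants appearing in guards are at most `K`. -/
def TA.MaxConstLE {A : Type} (M : TA A) (K : ℕ) : Prop :=
  ∀ θ ∈ M.trans, θ.guard.maxConst ≤ K

/-- `M` reaches the same control state on reading `u` and `v` from the initial
configuration. -/
def TA.SameState {A : Type} (M : TA A) (u v : TimedWord A) : Prop :=
  ∃ q : M.Q, ∃ ν ν' : ℝ≥0, Steps M (M.init, 0) u (q, ν) ∧ Steps M (M.init, 0) v (q, ν')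

/-- A `K`-acceptor. -/
def IsKAcceptor {A : Type} (M : TA A) (K : ℕ) : Prop :=
  M.IsFinite ∧ M.Complete ∧ M.Deterministic ∧ M.IsIRTA ∧ M.IsStrict K ∧ M.MaxConstLE K ∧
    ∀ u v : TimedWord A, M.SameState u v → RegEq K (cKW K u) (cKW K v)

/-! ### Equivalences on timed words -/

/-- `L`-preservation of a relation on timed words. -/
def LPreserving {A : Type} (L : Set (TimedWord A)) (r : TimedWord A → TimedWord A → Prop) :
    Prop :=
  ∀ u v : TimedWord A, r u v → (u ∈ L ↔ v ∈ L)

/-- `K`-monotonicity of a relation on timed words. -/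
def KMonotonic {A : Type} (K : ℕ) (r : TimedWord A → TimedWord A → Prop) : Prop :=
  ∀ u v : TimedWord A, r u v →
    RegEq K (cKW K u) (cKW K v) ∧
      ∀ (a : A) (t t' : ℝ≥0), RegEq K (cKW K u + t) (cKW K v + t') →
        r (u ++ [(t, a)]) (v ++ [(t', a)])

/-- Finite index: there are finitely many classes `{v | r u v}`. -/
def FiniteIndex {A : Type} (r : TimedWord A → TimedWord A → Prop) : Prop :=
  Set.Finite (Set.range fun u : TimedWord A => {v : TimedWord A | r u v})

/-! ### The rescaling maps -/

/-- The bijection `f_{λ→λ'}` of the open unit interval. -/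
noncomputable def fScale (lam lam' t : ℝ≥0) : ℝ≥0 :=
  if t ≤ lam then (lam' / lam) * t else lam' + ((1 - lam') / (1 - lam)) * (t - lam)

/-- The new delay `t'` computed from the current clock values `y, y'` and delay `t`. -/
noncomputable def tauStep (K : ℕ) (y y' t : ℝ≥0) : ℝ≥0 :=
  if (IsNatVal y ∧ IsNatVal y') ∨ ((K : ℝ≥0) < y ∧ (K : ℝ≥0) < y') then t
  else (⌊t⌋₊ : ℝ≥0) + fScale (1 - fracPart y) (1 - fracPart y') (fracPart t)

/-- Auxiliary rescaling map on timestamps, carrying the current clock values. -/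
noncomputable def tauAux (K : ℕ) : ℝ≥0 → ℝ≥0 → Timestamp → Timestamp
  | _, _, [] => []
  | y, y', t :: d =>
      tauStep K y y' t ::
        tauAux K (resetStep K (y + t)) (resetStep K (y' + tauStep K y y' t)) d

/-- The rescaling map `τ_{x→x'}` on timestamps. -/
noncomputable def tau (K : ℕ) (x x' : ℝ≥0) (d : Timestamp) : Timestamp :=
  tauAux K (resetStep K x) (resetStep K x') d

/-- Auxiliary rescaling map on timed words. -/
noncomputable def tauWAux {A : Type} (K : ℕ) : ℝ≥0 → ℝ≥0 → TimedWord A → TimedWord A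
  | _, _, [] => []
  | y, y', (t, a) :: w =>
      (tauStep K y y' t, a) ::
        tauWAux K (resetStep K (y + t)) (resetStep K (y' + tauStep K y y' t)) w

/-- The rescaling map `τ_{x→x'}` on timed words. -/
noncomputable def tauW {A : Type} (K : ℕ) (x x' : ℝ≥0) (w : TimedWord A) : TimedWord A :=
  tauWAux K (resetStep K x) (resetStep K x') w

/-! ### Residuals and the syntactic equivalence -/

/-- The residual language `u^{-1}L`. -/
def residual {A : Type} (L : Set (TimedWord A)) (u : TimedWord A) : Set (TimedWord A) :=
  {w : TimedWord A | u ++ w ∈ L}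

/-- The syntactic equivalence `≈^{L,K}`. -/
def ApproxLK {A : Type} (L : Set (TimedWord A)) (K : ℕ) (u v : TimedWord A) : Prop :=
  RegEq K (cKW K u) (cKW K v) ∧
    (tauW K (cKW K u) (cKW K v)) '' (residual L u) = residual L v

/-! ### The automaton built from a monotonic equivalence -/

/-- The region guard `φ([t])`. -/
noncomputable def phiOf (K : ℕ) (t : ℝ≥0) : CC :=
  if t ≤ (K : ℝ≥0) then
    (if IsNatVal t then CC.eq ⌊t⌋₊ else CC.and (CC.gt ⌊t⌋₊) (CC.lt (⌊t⌋₊ + 1)))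
  else CC.gt K

/-- The automaton `A_≈` built from an equivalence `s` on timed words. -/
noncomputable def Aapprox {A : Type} (L : Set (TimedWord A)) (K : ℕ)
    (s : Setoid (TimedWord A)) : TA A where
  Q := Quotient s
  init := Quotient.mk s ([] : TimedWord A)
  final := {q : Quotient s | ∃ u : TimedWord A, q = Quotient.mk s u ∧ u ∈ L}
  trans := {θ : TTrans (Quotient s) A |
    ∃ (u : TimedWord A) (a : A) (t : ℝ≥0),
      θ.src = Quotient.mk s u ∧ θ.dst = Quotient.mk s (u ++ [(t, a)]) ∧ θ.lab = a ∧
      θ.guard = phiOf K (cKW K u + t) ∧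
      (θ.reset = true ↔ ∃ m : ℕ, m ≤ K ∧ cKW K u + t = (m : ℝ≥0))}

/-! ### Half-integral and small words -/

/-- Every delay has fractional part `0` or `1/2`. -/
def HalfIntegral {A : Type} (w : TimedWord A) : Prop :=
  ∀ p ∈ w, fracPart p.1 = 0 ∨ fracPart p.1 = 1 / 2

/-- Every delay is `< K + 1`. -/
def SmallWord {A : Type} (K : ℕ) (w : TimedWord A) : Prop :=
  ∀ p ∈ w, p.1 < (K : ℝ≥0) + 1

/-- The delays of `Σ_K`: half-integral values `≤ K + 1/2`. -/
def IsSigmaK (K : ℕ) (t : ℝ≥0) : Prop :=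
  (fracPart t = 0 ∨ fracPart t = 1 / 2) ∧ t ≤ (K : ℝ≥0) + 1 / 2

/-- Words over `Σ_K` (small half-integral words). -/
def SigmaWord {A : Type} (K : ℕ) (w : TimedWord A) : Prop :=
  ∀ p ∈ w, IsSigmaK K p.1



/-! ### `K`-acceptors with their region representatives -/

/-- A `K`-acceptor bundled with the half-integral representative of the
unique region of each state. -/
structure KAcc (A : Type) (K : ℕ) where
  M : TA A
  acc : IsKAcceptor M K
  reg : M.Q → ℝ≥0
  regHalf : ∀ q : M.Q, fracPart (reg q) = 0 ∨ fracPart (reg q) = 1 / 2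
  regLe : ∀ q : M.Q, reg q ≤ (K : ℝ≥0) + 1 / 2
  regSpec : ∀ (w : TimedWord A) (q : M.Q) (x : ℝ≥0),
    Steps M (M.init, 0) w (q, x) → RegEq K x (reg q)

/-- The minimization equivalences `∼^i` on the states of a `K`-acceptor. -/
def simEq {A : Type} {K : ℕ} (B : KAcc A K) : ℕ → B.M.Q → B.M.Q → Prop
  | 0, p, q => B.reg p = B.reg q ∧ (p ∈ B.M.final ↔ q ∈ B.M.final)
  | i + 1, p, q => simEq B i p q ∧
      ∀ (t : ℝ≥0) (a : A), IsSigmaK K t →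
        ∀ θ₁ θ₂ : TTrans B.M.Q A, θ₁ ∈ B.M.trans → θ₂ ∈ B.M.trans →
          θ₁.src = p → θ₂.src = q → θ₁.lab = a → θ₂.lab = a →
          θ₁.guard = phiOf K t → θ₂.guard = phiOf K t →
          simEq B i θ₁.dst θ₂.dst

/-- The quotient automaton `B/∼^m`. -/
noncomputable def quotTA {A : Type} {K : ℕ} (B : KAcc A K) (m : ℕ) : TA A where
  Q := Quot (simEq B m)
  init := Quot.mk (simEq B m) B.M.init
  final := {c : Quot (simEq B m) | ∃ q ∈ B.M.final, c = Quot.mk (simEq B m) q}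
  trans := {θ : TTrans (Quot (simEq B m)) A |
    ∃ θ₀ ∈ B.M.trans,
      θ.src = Quot.mk (simEq B m) θ₀.src ∧ θ.dst = Quot.mk (simEq B m) θ₀.dst ∧
      θ.lab = θ₀.lab ∧ θ.guard = θ₀.guard ∧ θ.reset = θ₀.reset}

/-! ### Observation tables -/

/-- An observation table over `Σ_K`. -/
structure ObsTable (A : Type) (K : ℕ) where
  U1 : Set (TimedWord A)
  E : Set (TimedWord A)
  val : TimedWord A → TimedWord A → Bool
  U1fin : U1.Finite
  Efin : E.Finite
  U1sigma : ∀ u ∈ U1, SigmaWord K u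
  Esigma : ∀ e ∈ E, SigmaWord K e
  epsU1 : ([] : TimedWord A) ∈ U1
  prefixClosed : ∀ (u : TimedWord A) (x : ℝ≥0 × A), u ++ [x] ∈ U1 → u ∈ U1
  epsE : ([] : TimedWord A) ∈ E
  suffixClosed : ∀ (x : ℝ≥0 × A) (e : TimedWord A), x :: e ∈ E → e ∈ E

/-- The set `U2` of one-letter `Σ_K`-extensions of `U1`. -/
def obsU2 {A : Type} {K : ℕ} (T : ObsTable A K) : Set (TimedWord A) :=
  {w : TimedWord A | ∃ u ∈ T.U1, ∃ (t : ℝ≥0) (a : A), IsSigmaK K t ∧ w = u ++ [(t, a)]}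

/-- `R(u)`: the row of `u` (restricted to `E`) together with `c^K_⊤(u)`. -/
noncomputable def Rof {A : Type} {K : ℕ} (T : ObsTable A K) (u : TimedWord A) :
    ({e : TimedWord A // e ∈ T.E} → Bool) × WithTop ℝ≥0 :=
  (fun e => T.val u e.1, cKTop K u)

/-- The table is closed. -/
def ObsTable.Closed {A : Type} {K : ℕ} (T : ObsTable A K) : Prop :=
  ∀ w ∈ obsU2 T, ∃ u ∈ T.U1, Rof T w = Rof T u

/-- The table is consistent. -/
def ObsTable.Consistent {A : Type} {K : ℕ} (T : ObsTable A K) : Prop :=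
  ∀ u ∈ T.U1, ∀ w ∈ T.U1, Rof T u = Rof T w →
    ∀ (t : ℝ≥0) (a : A), IsSigmaK K t → Rof T (u ++ [(t, a)]) = Rof T (w ++ [(t, a)])

/-- The automaton `A_𝒯` induced by a (closed and consistent) observation table. -/
noncomputable def ATable {A : Type} {K : ℕ} (T : ObsTable A K) : TA A where
  Q := {f : ({e : TimedWord A // e ∈ T.E} → Bool) × WithTop ℝ≥0 // ∃ u ∈ T.U1, f = Rof T u}
  init := ⟨Rof T [], ⟨[], T.epsU1, rfl⟩⟩
  final := {q | ∃ u ∈ T.U1, q.1 = Rof T u ∧ T.val u [] = true}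
  trans := {θ | ∃ u ∈ T.U1, ∃ (t : ℝ≥0) (a : A), IsSigmaK K t ∧
      θ.src.1 = Rof T u ∧ θ.dst.1 = Rof T (u ++ [(t, a)]) ∧ θ.lab = a ∧
      θ.guard = phiOf K (cKW K u + t) ∧
      (θ.reset = true ↔ ∃ m : ℕ, m ≤ K ∧ cKW K u + t = (m : ℝ≥0))}

/-- A `K`-acceptor is consistent with the observation table `𝒯`. -/
def ConsistentWith {A : Type} {K : ℕ} (M : TA A) (T : ObsTable A K) : Prop :=
  ∀ w : TimedWord A, (w ∈ T.U1 ∨ w ∈ obsU2 T) → ∀ e ∈ T.E,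
    ∀ (q : M.Q) (ν : ℝ≥0), Steps M (M.init, 0) (w ++ e) (q, ν) →
      (q ∈ M.final ↔ T.val w e = true)

/-- Isomorphism of one-clock timed automata. -/
structure TAIso {A : Type} (M N : TA A) where
  toEquiv : M.Q ≃ N.Q
  init_eq : toEquiv M.init = N.init
  final_iff : ∀ q : M.Q, q ∈ M.final ↔ toEquiv q ∈ N.final
  trans_iff : ∀ θ : TTrans M.Q A,
    θ ∈ M.trans ↔
      (⟨toEquiv θ.src, toEquiv θ.dst, θ.lab, θ.guard, θ.reset⟩ : TTrans N.Q A) ∈ N.trans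


lemma floor_add_fracPart (x : ℝ≥0) : (⌊x⌋₊ : ℝ≥0) + fracPart x = x :=
  add_tsub_cancel_of_le (Nat.floor_le (zero_le : 0 ≤ x))

lemma fracPart_lt_one (x : ℝ≥0) : fracPart x < 1 := by
  rw [fracPart, tsub_lt_iff_left (Nat.floor_le (zero_le : 0 ≤ x))]
  exact Nat.lt_floor_add_one x

lemma decomp_floor (k : ℕ) {β : ℝ≥0} (hβ : β < 1) : ⌊(k:ℝ≥0) + β⌋₊ = k := by
  rw [add_comm, Nat.floor_add_natCast (zero_le : 0 ≤ β), Nat.floor_eq_zero.2 hβ, zero_add]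

lemma decomp_frac (k : ℕ) {β : ℝ≥0} (hβ : β < 1) : fracPart ((k:ℝ≥0) + β) = β := by
  rw [fracPart, decomp_floor k hβ, add_tsub_cancel_left]

lemma fracPart_natCast (m : ℕ) : fracPart (m:ℝ≥0) = 0 := by
  simpa using decomp_frac m one_pos

lemma fracPart_eq_zero_iff (x : ℝ≥0) : fracPart x = 0 ↔ IsNatVal x := by
  constructor
  · intro h
    refine ⟨⌊x⌋₊, ?_⟩
    have hx := floor_add_fracPart x
    rw [h, add_zero] at hx
    exact hx.symm
  · rintro ⟨m, rfl⟩; exact fracPart_natCast m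

lemma regEq_refl (K : ℕ) (x : ℝ≥0) : RegEq K x x := Or.inl ⟨rfl, Iff.rfl⟩

lemma RegEq.symm {K : ℕ} {x y : ℝ≥0} (h : RegEq K x y) : RegEq K y x := by
  rcases h with ⟨h1, h2⟩ | ⟨h1, h2⟩
  · exact Or.inl ⟨h1.symm, h2.symm⟩
  · exact Or.inr ⟨h2, h1⟩

lemma RegEq.gt_trans {K : ℕ} {x y : ℝ≥0} (h : RegEq K x y) (hx : (K:ℝ≥0) < x) :
    (K:ℝ≥0) < y := by
  rcases h with ⟨h1, h2⟩ | ⟨h1, h2⟩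
  · have hKf : (K:ℝ≥0) ≤ (⌊x⌋₊:ℝ≥0) := by
      have h1' : (K:ℝ≥0) < (⌊x⌋₊:ℝ≥0) + 1 := lt_of_lt_of_le hx (Nat.lt_floor_add_one x).le
      have : K < ⌊x⌋₊ + 1 := by exact_mod_cast h1'
      exact_mod_cast Nat.lt_succ_iff.mp this
    by_cases hf : fracPart x = 0
    · have hxn : x = (⌊x⌋₊:ℝ≥0) := by
        have hx' := floor_add_fracPart x; rw [hf, add_zero] at hx'; exact hx'.symm
      have hyn : y = (⌊y⌋₊:ℝ≥0) := by
        have hy' := floor_add_fracPart y; rw [h2.mp hf, add_zero] at hy'; exact hy'.symm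
      rw [hyn]
      rw [hxn] at hx
      exact_mod_cast h1 ▸ hx
    · have hyf : fracPart y ≠ 0 := fun hz => hf (h2.mpr hz)
      have hlt : (⌊y⌋₊:ℝ≥0) < y := by
        conv_rhs => rw [← floor_add_fracPart y]
        exact lt_add_of_pos_right _ (pos_iff_ne_zero.2 hyf)
      calc (K:ℝ≥0) ≤ (⌊x⌋₊:ℝ≥0) := hKf
        _ = (⌊y⌋₊:ℝ≥0) := by exact_mod_cast h1
        _ < y := hlt
  · exact h2

lemma RegEq.trans {K : ℕ} {x y z : ℝ≥0} (h : RegEq K x y) (h' : RegEq K y z) :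
    RegEq K x z := by
  rcases h with ⟨h1, h2⟩ | ⟨h1, h2⟩
  · rcases h' with ⟨h1', h2'⟩ | ⟨h1', h2'⟩
    · exact Or.inl ⟨h1.trans h1', h2.trans h2'⟩
    · exact Or.inr ⟨(RegEq.symm (Or.inl ⟨h1, h2⟩)).gt_trans h1', h2'⟩
  · exact Or.inr ⟨h1, h'.gt_trans h2⟩

def Pcond (K : ℕ) (y y' : ℝ≥0) : Prop :=
  (IsNatVal y ∧ IsNatVal y') ∨ ((K : ℝ≥0) < y ∧ (K : ℝ≥0) < y')

lemma notP_spec {K : ℕ} {y y' : ℝ≥0} (h : RegEq K y y') (hP : ¬ Pcond K y y') :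
    ¬ IsNatVal y ∧ ¬ IsNatVal y' ∧ ⌊y⌋₊ = ⌊y'⌋₊ ∧ y ≤ (K:ℝ≥0) ∧ y' ≤ (K:ℝ≥0) := by
  rw [Pcond, not_or] at hP
  have hle : y ≤ (K:ℝ≥0) := not_lt.1 fun hgt => hP.2 ⟨hgt, h.gt_trans hgt⟩
  have hle' : y' ≤ (K:ℝ≥0) := not_lt.1 fun hgt => hP.2 ⟨h.symm.gt_trans hgt, hgt⟩
  rcases h with ⟨h1, h2⟩ | ⟨h1, h2⟩
  · have hnat : ¬ IsNatVal y := by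
      intro hy
      exact hP.1 ⟨hy, (fracPart_eq_zero_iff y').1 (h2.1 ((fracPart_eq_zero_iff y).2 hy))⟩
    have hnat' : ¬ IsNatVal y' := by
      intro hy
      exact hP.1 ⟨(fracPart_eq_zero_iff y).1 (h2.2 ((fracPart_eq_zero_iff y').2 hy)), hy⟩
    exact ⟨hnat, hnat', h1, hle, hle'⟩
  · exact absurd hle (not_le.2 h1)

variable {lam lam' lam'' s : ℝ≥0}

lemma cancel_div (a b c x : ℝ≥0) (hb : b ≠ 0) : a/b * (b/c * x) = a/c * x := by
  rw [← mul_assoc, div_mul_div_comm, mul_comm a b, mul_div_mul_left _ _ hb]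

lemma fScale_lt_lam' (hl : 0 < lam) (hl' : 0 < lam') (hs : s < lam) :
    fScale lam lam' s < lam' := by
  rw [fScale, if_pos hs.le]
  have h := mul_lt_mul_of_pos_left hs (div_pos hl' hl)
  rwa [div_mul_cancel₀ _ hl.ne'] at h

lemma fScale_lam (hl : 0 < lam) : fScale lam lam' lam = lam' := by
  rw [fScale, if_pos le_rfl, div_mul_cancel₀ _ hl.ne']

lemma fScale_gt_lam' (hl1 : lam < 1) (hl1' : lam' < 1) (hs : lam < s) :
    lam' < fScale lam lam' s := by
  rw [fScale, if_neg (not_le.2 hs)]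
  refine lt_add_of_pos_right _ ?_
  exact mul_pos (div_pos (tsub_pos_iff_lt.2 hl1') (tsub_pos_iff_lt.2 hl1))
    (tsub_pos_iff_lt.2 hs)

lemma fScale_lt_one (hl : 0 < lam) (hl1 : lam < 1) (hl1' : lam' < 1) (hs : s < 1) :
    fScale lam lam' s < 1 := by
  rw [fScale]
  split
  · have h1 : lam'/lam * s ≤ lam'/lam * lam :=
      mul_le_mul_of_nonneg_left (by assumption) zero_le
    rw [div_mul_cancel₀ _ hl.ne'] at h1
    exact lt_of_le_of_lt h1 hl1'
  · have h1 : (1 - lam')/(1-lam) * (s - lam) < (1 - lam')/(1-lam) * (1 - lam) := by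
      refine mul_lt_mul_of_pos_left ?_
        (div_pos (tsub_pos_iff_lt.2 hl1') (tsub_pos_iff_lt.2 hl1))
      exact tsub_lt_tsub_right_of_le (le_of_not_ge (by assumption)) hs
    rw [div_mul_cancel₀ _ (tsub_pos_iff_lt.2 hl1).ne'] at h1
    have h2 := add_lt_add_right h1 lam'
    rwa [add_tsub_cancel_of_le hl1'.le] at h2

lemma fScale_self (hl : 0 < lam) (hl1 : lam < 1) : fScale lam lam s = s := by
  rw [fScale]
  split
  · rw [div_self hl.ne', one_mul]
  · rw [div_self (tsub_pos_iff_lt.2 hl1).ne', one_mul,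
      add_tsub_cancel_of_le (le_of_not_ge (by assumption))]

lemma fScale_comp (hl : 0 < lam) (hl1 : lam < 1) (hl' : 0 < lam') (hl1' : lam' < 1)
    (hl'' : 0 < lam'') (hl1'' : lam'' < 1) :
    fScale lam' lam'' (fScale lam lam' s) = fScale lam lam'' s := by
  rcases lt_trichotomy s lam with hs | hs | hs
  · have h1 : fScale lam lam' s < lam' := fScale_lt_lam' hl hl' hs
    rw [fScale, if_pos h1.le, fScale, if_pos hs.le, fScale, if_pos hs.le,
      cancel_div _ _ _ _ hl'.ne']
  · subst hs
    rw [fScale_lam hl, fScale_lam hl', fScale_lam hl]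
  · have h1 : lam' < fScale lam lam' s := fScale_gt_lam' hl1 hl1' hs
    rw [fScale, if_neg (not_le.2 h1), fScale, if_neg (not_le.2 hs), fScale,
      if_neg (not_le.2 hs), add_tsub_cancel_left, cancel_div _ _ _ _
      (tsub_pos_iff_lt.2 hl1').ne']

lemma tauStep_pos {K : ℕ} {y y' : ℝ≥0} (h : Pcond K y y') (t : ℝ≥0) :
    tauStep K y y' t = t := if_pos h

lemma tauStep_neg {K : ℕ} {y y' : ℝ≥0} (h : ¬ Pcond K y y') (t : ℝ≥0) :
    tauStep K y y' t =
      (⌊t⌋₊ : ℝ≥0) + fScale (1 - fracPart y) (1 - fracPart y') (fracPart t) := if_neg h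

lemma natVal_floor {x : ℝ≥0} (h : IsNatVal x) : x = (⌊x⌋₊ : ℝ≥0) := by
  obtain ⟨m, rfl⟩ := h; rw [Nat.floor_natCast]

lemma nat_eq_of_regEq {K : ℕ} {x y : ℝ≥0} (h : RegEq K x y) (hx : IsNatVal x)
    (hy : IsNatVal y) : x = y ∨ ((K:ℝ≥0) < x ∧ (K:ℝ≥0) < y) := by
  rcases h with ⟨h1, _⟩ | h2
  · left; rw [natVal_floor hx, natVal_floor hy, h1]
  · right; exact h2

lemma lam_pos (y : ℝ≥0) : 0 < 1 - fracPart y := tsub_pos_iff_lt.2 (fracPart_lt_one y)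

lemma lam_lt_one {y : ℝ≥0} (h : ¬ IsNatVal y) : 1 - fracPart y < 1 := by
  refine tsub_lt_self one_pos (pos_iff_ne_zero.2 ?_)
  exact fun hz => h ((fracPart_eq_zero_iff y).1 hz)

lemma frac_add_lam (y : ℝ≥0) : fracPart y + (1 - fracPart y) = 1 :=
  add_tsub_cancel_of_le (fracPart_lt_one y).le

lemma Pcond_self {K : ℕ} {y : ℝ≥0} (h : ¬ Pcond K y y) : ¬ IsNatVal y :=
  fun hn => h (Or.inl ⟨hn, hn⟩)

lemma tauStep_self (K : ℕ) (y t : ℝ≥0) : tauStep K y y t = t := by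
  by_cases h : Pcond K y y
  · exact tauStep_pos h t
  · rw [tauStep_neg h, fScale_self (lam_pos y) (lam_lt_one (Pcond_self h)),
      floor_add_fracPart]

lemma regEq_parts {K : ℕ} (k : ℕ) {β β' : ℝ≥0} (hβ : β < 1) (hβ' : β' < 1)
    (hz : β = 0 ↔ β' = 0) : RegEq K ((k:ℝ≥0) + β) ((k:ℝ≥0) + β') :=
  Or.inl ⟨by rw [decomp_floor k hβ, decomp_floor k hβ'],
    by rw [decomp_frac k hβ, decomp_frac k hβ']; exact hz⟩

lemma split_parts (y t : ℝ≥0) :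
    y + t = ((⌊y⌋₊ + ⌊t⌋₊ : ℕ) : ℝ≥0) + (fracPart y + fracPart t) := by
  conv_lhs => rw [← floor_add_fracPart y, ← floor_add_fracPart t]
  push_cast
  ring

lemma split_parts2 (y : ℝ≥0) (n : ℕ) (g : ℝ≥0) :
    y + ((n:ℝ≥0) + g) = ((⌊y⌋₊ + n : ℕ) : ℝ≥0) + (fracPart y + g) := by
  conv_lhs => rw [← floor_add_fracPart y]
  push_cast
  ring

lemma shift_one (k : ℕ) {β : ℝ≥0} (hβ : 1 ≤ β) :
    (k : ℝ≥0) + β = ((k + 1 : ℕ) : ℝ≥0) + (β - 1) := by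
  push_cast
  rw [add_assoc, add_tsub_cancel_of_le hβ]

lemma regEq_add {K : ℕ} {y y' : ℝ≥0} (h : RegEq K y y') (t : ℝ≥0) :
    RegEq K (y + t) (y' + tauStep K y y' t) := by
  by_cases hP : Pcond K y y'
  · rw [tauStep_pos hP]
    rcases hP with ⟨hy, hy'⟩ | ⟨hy, hy'⟩
    · rcases nat_eq_of_regEq h hy hy' with rfl | ⟨h1, h2⟩
      · exact regEq_refl K _
      · exact Or.inr ⟨lt_of_lt_of_le h1 le_self_add, lt_of_lt_of_le h2 le_self_add⟩
    · exact Or.inr ⟨lt_of_lt_of_le hy le_self_add, lt_of_lt_of_le hy' le_self_add⟩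
  · obtain ⟨hn, hn', hfl, _, _⟩ := notP_spec h hP
    rw [tauStep_neg hP]
    set α := fracPart y with hα
    set α' := fracPart y' with hα'
    set s := fracPart t with hs
    set f := fScale (1 - α) (1 - α') s with hf
    have hα0 : α ≠ 0 := fun hz => hn ((fracPart_eq_zero_iff y).1 hz)
    have hα0' : α' ≠ 0 := fun hz => hn' ((fracPart_eq_zero_iff y').1 hz)
    have hα1 : α < 1 := fracPart_lt_one y
    have hα1' : α' < 1 := fracPart_lt_one y'
    have hs1 : s < 1 := fracPart_lt_one t
    have hlam : 0 < 1 - α := lam_pos y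
    have hlam' : 0 < 1 - α' := lam_pos y'
    have hlam1 : 1 - α < 1 := lam_lt_one hn
    have hlam1' : 1 - α' < 1 := lam_lt_one hn'
    have hf1 : f < 1 := fScale_lt_one hlam hlam1 hlam1' hs1
    have hsplit : y + t = ((⌊y⌋₊ + ⌊t⌋₊ : ℕ) : ℝ≥0) + (α + s) := split_parts y t
    have hsplit' : y' + ((⌊t⌋₊ : ℝ≥0) + f)
        = ((⌊y⌋₊ + ⌊t⌋₊ : ℕ) : ℝ≥0) + (α' + f) := by
      rw [split_parts2 y' ⌊t⌋₊ f, hfl]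
    rw [hsplit, hsplit']
    rcases lt_trichotomy s (1 - α) with hc | hc | hc
    · -- no carry on either side
      have hful : f < 1 - α' := fScale_lt_lam' hlam hlam' hc
      have h1 : α + s < 1 := by
        have := add_lt_add_right hc α
        rwa [frac_add_lam y] at this
      have h2 : α' + f < 1 := by
        have := add_lt_add_right hful α'
        rwa [frac_add_lam y'] at this
      refine regEq_parts _ h1 h2 ?_
      constructor
      · intro hz; exact absurd (by simpa using (add_eq_zero.1 hz).1) hα0
      · intro hz; exact absurd (by simpa using (add_eq_zero.1 hz).1) hα0'
    · -- both hit the integer exactly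
      have hfeq : f = 1 - α' := by rw [hf, hc]; exact fScale_lam hlam
      have h1 : α + s = 1 := by rw [hc, frac_add_lam y]
      have h2 : α' + f = 1 := by rw [hfeq, frac_add_lam y']
      rw [h1, h2]
      exact regEq_refl K _
    · -- carry on both sides
      have hfgt : 1 - α' < f := fScale_gt_lam' hlam1 hlam1' hc
      have h1 : 1 ≤ α + s := by
        have := add_le_add_right hc.le α
        rwa [frac_add_lam y] at this
      have h2 : 1 ≤ α' + f := by
        have := add_le_add_right hfgt.le α'
        rwa [frac_add_lam y'] at this
      rw [shift_one _ h1, shift_one _ h2]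
      have h3 : α + s - 1 < 1 := by
        have : α + s < 1 + 1 := add_lt_add hα1 hs1
        rwa [tsub_lt_iff_left h1]
      have h4 : α' + f - 1 < 1 := by
        have : α' + f < 1 + 1 := add_lt_add hα1' hf1
        rwa [tsub_lt_iff_left h2]
      refine regEq_parts _ h3 h4 ?_
      constructor
      · intro hz
        have : α + s ≤ 1 := tsub_eq_zero_iff_le.1 hz
        have heq : α + s = 1 := le_antisymm this h1
        exact absurd heq.le (not_le.2 (by rw [← frac_add_lam y]; exact add_lt_add_right hc α))
      · intro hz
        have : α' + f ≤ 1 := tsub_eq_zero_iff_le.1 hz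
        have heq : α' + f = 1 := le_antisymm this h2
        exact absurd heq.le (not_le.2 (by rw [← frac_add_lam y']; exact add_lt_add_right hfgt α'))

lemma Pcond_step {K : ℕ} {y y' y'' : ℝ≥0} (h : RegEq K y y') (h' : RegEq K y' y'')
    (hP : Pcond K y y') : Pcond K y' y'' := by
  rcases hP with ⟨hy, hy'⟩ | ⟨hy, hy'⟩
  · rcases h' with ⟨h1, h2⟩ | h2
    · exact Or.inl ⟨hy', (fracPart_eq_zero_iff y'').1
        (h2.1 ((fracPart_eq_zero_iff y').2 hy'))⟩
    · exact Or.inr h2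
  · exact Or.inr ⟨hy', h'.gt_trans hy'⟩

lemma Pcond_trans {K : ℕ} {y y' y'' : ℝ≥0} (h : RegEq K y y') (h' : RegEq K y' y'')
    (hP : Pcond K y y') (hP' : Pcond K y' y'') : Pcond K y y'' := by
  rcases hP with ⟨hy, hy'⟩ | ⟨hy, hy'⟩
  · rcases hP' with ⟨hy1, hy2⟩ | ⟨hy1, hy2⟩
    · exact Or.inl ⟨hy, hy2⟩
    · rcases nat_eq_of_regEq h hy hy' with rfl | ⟨g1, g2⟩
      · exact Or.inr ⟨hy1, hy2⟩
      · exact Or.inr ⟨g1, hy2⟩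
  · exact Or.inr ⟨hy, h'.gt_trans hy'⟩

lemma tauStep_comp {K : ℕ} {y y' y'' : ℝ≥0} (h : RegEq K y y') (h' : RegEq K y' y'')
    (t : ℝ≥0) : tauStep K y' y'' (tauStep K y y' t) = tauStep K y y'' t := by
  by_cases hP : Pcond K y y'
  · have hP' : Pcond K y' y'' := Pcond_step h h' hP
    rw [tauStep_pos hP, tauStep_pos hP', tauStep_pos (Pcond_trans h h' hP hP')]
  · obtain ⟨hn, hn', hfl, hle, hle'⟩ := notP_spec h hP
    have hP' : ¬ Pcond K y' y'' := by
      rintro (⟨h1, _⟩ | ⟨h1, _⟩)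
      · exact hn' h1
      · exact absurd hle' (not_le.2 h1)
    obtain ⟨_, hn'', _, _, _⟩ := notP_spec h' hP'
    have hP'' : ¬ Pcond K y y'' := by
      rintro (⟨h1, _⟩ | ⟨h1, _⟩)
      · exact hn h1
      · exact absurd hle (not_le.2 h1)
    rw [tauStep_neg hP, tauStep_neg hP', tauStep_neg hP'']
    have hf1 : fScale (1 - fracPart y) (1 - fracPart y') (fracPart t) < 1 :=
      fScale_lt_one (lam_pos y) (lam_lt_one hn) (lam_lt_one hn') (fracPart_lt_one t)
    rw [decomp_floor ⌊t⌋₊ hf1, decomp_frac ⌊t⌋₊ hf1,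
      fScale_comp (lam_pos y) (lam_lt_one hn) (lam_pos y') (lam_lt_one hn')
        (lam_pos y'') (lam_lt_one hn'')]

lemma tauStep_inv {K : ℕ} {y y' : ℝ≥0} (h : RegEq K y y') (t : ℝ≥0) :
    tauStep K y' y (tauStep K y y' t) = t := by
  rw [tauStep_comp h h.symm, tauStep_self]

lemma resetStep_pos {K : ℕ} {v : ℝ≥0} (h : ∃ m : ℕ, m ≤ K ∧ v = (m : ℝ≥0)) :
    resetStep K v = 0 := if_pos h

lemma resetStep_neg {K : ℕ} {v : ℝ≥0} (h : ¬ ∃ m : ℕ, m ≤ K ∧ v = (m : ℝ≥0)) :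
    resetStep K v = v := if_neg h

lemma resetStep_idem (K : ℕ) (v : ℝ≥0) : resetStep K (resetStep K v) = resetStep K v := by
  by_cases h : ∃ m : ℕ, m ≤ K ∧ v = (m : ℝ≥0)
  · rw [resetStep_pos h, resetStep_pos ⟨0, Nat.zero_le K, by simp⟩]
  · rw [resetStep_neg h, resetStep_neg h]

lemma regEq_resetStep {K : ℕ} {a b : ℝ≥0} (h : RegEq K a b) :
    RegEq K (resetStep K a) (resetStep K b) := by
  by_cases ha : ∃ m : ℕ, m ≤ K ∧ a = (m : ℝ≥0)
  · obtain ⟨m, hm, rfl⟩ := ha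
    have hb : ∃ m' : ℕ, m' ≤ K ∧ b = (m' : ℝ≥0) := by
      rcases h with ⟨h1, h2⟩ | ⟨h1, h2⟩
      · refine ⟨m, hm, ?_⟩
        have hfb : fracPart b = 0 := h2.1 (fracPart_natCast m)
        have := floor_add_fracPart b
        rw [hfb, add_zero] at this
        rw [← this, ← h1, Nat.floor_natCast]
      · exact absurd (Nat.cast_le.2 hm) (not_le.2 h1)
    rw [resetStep_pos ⟨m, hm, rfl⟩, resetStep_pos hb]
    exact regEq_refl K 0
  · have hb : ¬ ∃ m' : ℕ, m' ≤ K ∧ b = (m' : ℝ≥0) := by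
      rintro ⟨m, hm, rfl⟩
      refine ha ⟨m, hm, ?_⟩
      rcases h.symm with ⟨h1, h2⟩ | ⟨h1, h2⟩
      · have hfa : fracPart a = 0 := h2.1 (fracPart_natCast m)
        have := floor_add_fracPart a
        rw [hfa, add_zero] at this
        rw [← this, ← h1, Nat.floor_natCast]
      · exact absurd (Nat.cast_le.2 hm) (not_le.2 h1)
    rw [resetStep_neg ha, resetStep_neg hb]
    exact h

lemma regEq_next {K : ℕ} {y y' : ℝ≥0} (h : RegEq K y y') (t : ℝ≥0) :
    RegEq K (resetStep K (y + t)) (resetStep K (y' + tauStep K y y' t)) :=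
  regEq_resetStep (regEq_add h t)

lemma tauWAux_self {A : Type} (K : ℕ) (y : ℝ≥0) (w : TimedWord A) :
    tauWAux K y y w = w := by
  induction w generalizing y with
  | nil => rfl
  | cons p w ih =>
    obtain ⟨t, a⟩ := p
    rw [tauWAux, tauStep_self, ih]

lemma tauWAux_comp {A : Type} {K : ℕ} {y y' y'' : ℝ≥0} (h : RegEq K y y')
    (h' : RegEq K y' y'') (w : TimedWord A) :
    tauWAux K y' y'' (tauWAux K y y' w) = tauWAux K y y'' w := by
  induction w generalizing y y' y'' with
  | nil => rfl
  | cons p w ih =>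
    obtain ⟨t, a⟩ := p
    have hcomp := tauStep_comp h h' t
    have h2 : RegEq K (resetStep K (y' + tauStep K y y' t))
        (resetStep K (y'' + tauStep K y y'' t)) := by
      have h3 := regEq_next h' (tauStep K y y' t)
      rwa [hcomp] at h3
    simp only [tauWAux]
    rw [hcomp, ih (regEq_next h t) h2]

lemma tauWAux_inv {A : Type} {K : ℕ} {y y' : ℝ≥0} (h : RegEq K y y') (w : TimedWord A) :
    tauWAux K y' y (tauWAux K y y' w) = w := by
  rw [tauWAux_comp h h.symm, tauWAux_self]

lemma tauWAux_image_eq {A : Type} {K : ℕ} {y y' : ℝ≥0} (h : RegEq K y y')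
    {R S : Set (TimedWord A)} (hiff : ∀ w, w ∈ R ↔ tauWAux K y y' w ∈ S) :
    tauWAux K y y' '' R = S := by
  ext w'
  constructor
  · rintro ⟨w, hw, rfl⟩
    exact (hiff w).1 hw
  · intro hw'
    refine ⟨tauWAux K y' y w', ?_, tauWAux_inv h.symm w'⟩
    rw [hiff, tauWAux_inv h.symm w']
    exact hw'

lemma cKAux_append (K : ℕ) (d : List ℝ≥0) (t : ℝ≥0) :
    ∀ v, cKAux K v (d ++ [t]) = resetStep K (cKAux K v d + t) := by
  induction d with
  | nil => intro v; rfl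
  | cons s d ih => intro v; rw [List.cons_append, cKAux, ih, cKAux]

lemma cKW_append {A : Type} (K : ℕ) (u : TimedWord A) (t : ℝ≥0) (a : A) :
    cKW K (u ++ [(t, a)]) = resetStep K (cKW K u + t) := by
  rw [cKW, cKW, cK, cK, List.map_append]
  exact cKAux_append K _ t 0

lemma cKAux_reduced (K : ℕ) (d : List ℝ≥0) :
    ∀ v, resetStep K v = v → resetStep K (cKAux K v d) = cKAux K v d := by
  induction d with
  | nil => intro v hv; exact hv
  | cons t d ih => intro v hv; exact ih _ (resetStep_idem K _)

lemma cKW_reduced {A : Type} (K : ℕ) (u : TimedWord A) :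
    resetStep K (cKW K u) = cKW K u :=
  cKAux_reduced K _ 0 (resetStep_pos ⟨0, Nat.zero_le K, by simp⟩)

lemma tauW_eq_aux {A : Type} {K : ℕ} (u v : TimedWord A) (w : TimedWord A) :
    tauW K (cKW K u) (cKW K v) w = tauWAux K (cKW K u) (cKW K v) w := by
  rw [tauW, cKW_reduced, cKW_reduced]

lemma steps_append {A : Type} {M : TA A} {c c' c'' : M.Q × ℝ≥0} {u w : TimedWord A}
    (h1 : Steps M c u c') (h2 : Steps M c' w c'') : Steps M c (u ++ w) c'' := by
  induction h1 with
  | nil => exact h2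
  | cons θ hθ hsrc hlab hg hrest ih => exact Steps.cons θ hθ hsrc hlab hg (ih h2)

lemma steps_split {A : Type} {M : TA A} {u w : TimedWord A} :
    ∀ {c c'' : M.Q × ℝ≥0}, Steps M c (u ++ w) c'' →
      ∃ c', Steps M c u c' ∧ Steps M c' w c'' := by
  induction u with
  | nil => intro c c'' h; exact ⟨c, Steps.nil c, h⟩
  | cons p u ih =>
    intro c c'' h
    obtain ⟨t, a⟩ := p
    obtain ⟨q, ν⟩ := c
    cases h with
    | cons θ hθ hsrc hlab hg hrest =>
      obtain ⟨c', hc1, hc2⟩ := ih hrest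
      exact ⟨c', Steps.cons θ hθ hsrc hlab hg hc1, hc2⟩

lemma steps_unique {A : Type} {M : TA A} (hdet : M.Deterministic) {w : TimedWord A} :
    ∀ {c c₁ c₂ : M.Q × ℝ≥0}, Steps M c w c₁ → Steps M c w c₂ → c₁ = c₂ := by
  induction w with
  | nil =>
    intro c c₁ c₂ h1 h2
    cases h1; cases h2; rfl
  | cons p w ih =>
    intro c c₁ c₂ h1 h2
    obtain ⟨t, a⟩ := p
    obtain ⟨q, ν⟩ := c
    cases h1 with
    | cons θ₁ hθ₁ hsrc₁ hlab₁ hg₁ hrest₁ =>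
      cases h2 with
      | cons θ₂ hθ₂ hsrc₂ hlab₂ hg₂ hrest₂ =>
        have hθeq : θ₁ = θ₂ := by
          by_contra hne
          exact hdet θ₁ hθ₁ θ₂ hθ₂ hne (hsrc₁.trans hsrc₂.symm)
            (hlab₁.trans hlab₂.symm) (ν + t) ⟨hg₁, hg₂⟩
        subst hθeq
        exact ih hrest₁ hrest₂

lemma reset_eq_resetStep {A : Type} {M : TA A} {K : ℕ} (hstrict : M.IsStrict K)
    (hmax : M.MaxConstLE K) {θ : TTrans M.Q A} (hθ : θ ∈ M.trans) {ν : ℝ≥0}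
    (hg : θ.guard.sat ν) : (if θ.reset then (0:ℝ≥0) else ν) = resetStep K ν := by
  obtain ⟨hsg, hiff⟩ := hstrict θ hθ
  by_cases hr : θ.reset
  · obtain ⟨m, hm⟩ := hiff.2 hr
    rw [hm] at hg
    have hmK : m ≤ K := by have := hmax θ hθ; rwa [hm] at this
    rw [if_pos hr, resetStep_pos ⟨m, hmK, hg⟩]
  · rw [if_neg hr]
    have hne : ¬ ∃ m : ℕ, θ.guard = CC.eq m := fun h => hr (hiff.1 h)
    rcases hsg with he | ⟨m, hm⟩ | hK
    · exact absurd he hne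
    · rw [hm] at hg
      obtain ⟨hg1, hg2⟩ := hg
      refine (resetStep_neg ?_).symm
      rintro ⟨m', _, rfl⟩
      simp only [CC.sat] at hg1 hg2
      have h1 : m < m' := by exact_mod_cast hg1
      have h2 : m' < m + 1 := by exact_mod_cast hg2
      omega
    · rw [hK] at hg
      simp only [CC.sat] at hg
      refine (resetStep_neg ?_).symm
      rintro ⟨m', hm', rfl⟩
      exact absurd (Nat.cast_le.2 hm') (not_le.2 hg)

lemma steps_clock {A : Type} {M : TA A} {K : ℕ} (hstrict : M.IsStrict K)
    (hmax : M.MaxConstLE K) {w : TimedWord A} :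
    ∀ {q : M.Q} {v : ℝ≥0} {p : M.Q} {ν : ℝ≥0}, Steps M (q, v) w (p, ν) →
      ν = cKAux K v (w.map Prod.fst) := by
  induction w with
  | nil => intro q v p ν h; cases h; rfl
  | cons x w ih =>
    intro q v p ν h
    obtain ⟨t, a⟩ := x
    cases h with
    | cons θ hθ hsrc hlab hg hrest =>
      rw [reset_eq_resetStep hstrict hmax hθ hg] at hrest
      exact ih hrest

lemma interval_char (m : ℕ) (x : ℝ≥0) :
    ((m:ℝ≥0) < x ∧ x < (m:ℝ≥0) + 1) ↔ (⌊x⌋₊ = m ∧ fracPart x ≠ 0) := by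
  constructor
  · rintro ⟨h1, h2⟩
    have hfl : ⌊x⌋₊ = m := by
      have hu : ⌊x⌋₊ < m + 1 := by
        rw [Nat.floor_lt (zero_le : 0 ≤ x)]
        exact_mod_cast h2
      have hlo : m ≤ ⌊x⌋₊ := Nat.le_floor h1.le
      omega
    refine ⟨hfl, fun hz => ?_⟩
    have := floor_add_fracPart x
    rw [hz, add_zero, hfl] at this
    rw [← this] at h1
    exact lt_irrefl _ h1
  · rintro ⟨hfl, hnz⟩
    have hx := floor_add_fracPart x
    rw [hfl] at hx
    constructor
    · rw [← hx]
      exact lt_add_of_pos_right _ (pos_iff_ne_zero.2 hnz)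
    · rw [← hx]
      exact add_lt_add_right (fracPart_lt_one x) _

lemma guard_regEq {K : ℕ} {φ : CC} (hsg : StrictGuard K φ) (hmax : φ.maxConst ≤ K)
    {x y : ℝ≥0} (h : RegEq K x y) : φ.sat x → φ.sat y := by
  intro hx
  rcases hsg with ⟨m, rfl⟩ | ⟨m, rfl⟩ | rfl
  · simp only [CC.sat] at hx ⊢
    simp only [CC.maxConst] at hmax
    subst hx
    rcases h with ⟨h1, h2⟩ | ⟨h1, _⟩
    · have hfy : fracPart y = 0 := h2.1 (fracPart_natCast m)
      have hy := floor_add_fracPart y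
      rw [hfy, add_zero, ← h1, Nat.floor_natCast] at hy
      exact hy.symm
    · exact absurd (Nat.cast_le.2 hmax) (not_le.2 h1)
  · simp only [CC.sat] at hx ⊢
    simp only [CC.maxConst] at hmax
    have hx' := (interval_char m x).1 (by exact_mod_cast hx)
    rcases h with ⟨h1, h2⟩ | ⟨h1, _⟩
    · have := (interval_char m y).2 ⟨h1 ▸ hx'.1, fun hz => hx'.2 (h2.2 hz)⟩
      exact_mod_cast this
    · exfalso
      have hlt : x < (m:ℝ≥0) + 1 := by exact_mod_cast hx.2
      have : (K:ℝ≥0) < (m:ℝ≥0) + 1 := lt_trans h1 hlt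
      have : K < m + 1 := by exact_mod_cast this
      omega
  · simp only [CC.sat] at hx ⊢
    exact h.gt_trans hx

lemma guard_regEq_iff {K : ℕ} {φ : CC} (hsg : StrictGuard K φ) (hmax : φ.maxConst ≤ K)
    {x y : ℝ≥0} (h : RegEq K x y) : φ.sat x ↔ φ.sat y :=
  ⟨guard_regEq hsg hmax h, guard_regEq hsg hmax h.symm⟩

lemma steps_transfer {A : Type} {M : TA A} {K : ℕ} (hdet : M.Deterministic)
    (hstrict : M.IsStrict K) (hmax : M.MaxConstLE K) {w : TimedWord A} :
    ∀ {q : M.Q} {x x' : ℝ≥0}, RegEq K x x' → ∀ {p : M.Q} {y : ℝ≥0},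
      Steps M (q, x) w (p, y) →
      ∃ y' : ℝ≥0, Steps M (q, x') (tauWAux K x x' w) (p, y') ∧ RegEq K y y' := by
  induction w with
  | nil =>
    intro q x x' h p y hs
    cases hs
    exact ⟨x', Steps.nil _, h⟩
  | cons e w ih =>
    intro q x x' h p y hs
    obtain ⟨t, a⟩ := e
    cases hs with
    | cons θ hθ hsrc hlab hg hrest =>
      set t' := tauStep K x x' t with ht'
      have hadd : RegEq K (x + t) (x' + t') := regEq_add h t
      have hg' : θ.guard.sat (x' + t') :=
        guard_regEq (hstrict θ hθ).1 (hmax θ hθ) hadd hg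
      rw [reset_eq_resetStep hstrict hmax hθ hg] at hrest
      have hnext : RegEq K (resetStep K (x + t)) (resetStep K (x' + t')) :=
        regEq_resetStep hadd
      obtain ⟨y', hsteps', hy'⟩ := ih hnext hrest
      refine ⟨y', ?_, hy'⟩
      rw [tauWAux]
      refine Steps.cons θ hθ hsrc hlab hg' ?_
      rwa [reset_eq_resetStep hstrict hmax hθ hg']

lemma tauW_eq_tauWAux {A : Type} (K : ℕ) (u v : TimedWord A) :
    (tauW K (cKW K u) (cKW K v) : TimedWord A → TimedWord A)
      = tauWAux K (cKW K u) (cKW K v) := by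
  funext w
  rw [tauW, cKW_reduced, cKW_reduced]

lemma approx_mem_iff {A : Type} {L : Set (TimedWord A)} {K : ℕ} {u v : TimedWord A}
    (h : ApproxLK L K u v) (w : TimedWord A) :
    w ∈ residual L u ↔ tauWAux K (cKW K u) (cKW K v) w ∈ residual L v := by
  have h2 := h.2
  rw [tauW_eq_tauWAux] at h2
  constructor
  · intro hw
    rw [← h2]
    exact Set.mem_image_of_mem _ hw
  · intro hw
    rw [← h2] at hw
    obtain ⟨z, hz, heq⟩ := hw
    have : z = w := by
      have := congrArg (tauWAux K (cKW K v) (cKW K u)) heq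
      rwa [tauWAux_inv h.1, tauWAux_inv h.1] at this
    exact this ▸ hz

lemma approx_of_iff {A : Type} {L : Set (TimedWord A)} {K : ℕ} {u v : TimedWord A}
    (hreg : RegEq K (cKW K u) (cKW K v))
    (hiff : ∀ w, w ∈ residual L u ↔ tauWAux K (cKW K u) (cKW K v) w ∈ residual L v) :
    ApproxLK L K u v := by
  refine ⟨hreg, ?_⟩
  rw [tauW_eq_tauWAux]
  exact tauWAux_image_eq hreg hiff

lemma approx_refl {A : Type} (L : Set (TimedWord A)) (K : ℕ) (u : TimedWord A) :
    ApproxLK L K u u :=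
  approx_of_iff (regEq_refl K _) (fun w => by rw [tauWAux_self])

lemma approx_symm {A : Type} {L : Set (TimedWord A)} {K : ℕ} {u v : TimedWord A}
    (h : ApproxLK L K u v) : ApproxLK L K v u := by
  refine approx_of_iff h.1.symm (fun w => ?_)
  have := approx_mem_iff h (tauWAux K (cKW K v) (cKW K u) w)
  rwa [tauWAux_inv h.1.symm, iff_comm] at this

lemma approx_trans {A : Type} {L : Set (TimedWord A)} {K : ℕ} {u v z : TimedWord A}
    (h : ApproxLK L K u v) (h' : ApproxLK L K v z) : ApproxLK L K u z := by
  refine approx_of_iff (h.1.trans h'.1) (fun w => ?_)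
  rw [approx_mem_iff h w, approx_mem_iff h' _, tauWAux_comp h.1 h'.1]

lemma sameState_approx {A : Type} {K : ℕ} {L : Set (TimedWord A)} {B : TA A}
    (hB : IsKAcceptor B K) (hL : B.Lang = L) {u v : TimedWord A}
    (hss : B.SameState u v) : ApproxLK L K u v := by
  obtain ⟨hfin, hcomp, hdet, hirta, hstrict, hmax, hacc⟩ := hB
  have hreg : RegEq K (cKW K u) (cKW K v) := hacc u v hss
  obtain ⟨q, ν, ν', hu, hv⟩ := hss
  have hνu : ν = cKW K u := steps_clock hstrict hmax hu
  have hνv : ν' = cKW K v := steps_clock hstrict hmax hv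
  subst hνu hνv
  refine approx_of_iff hreg (fun w => ?_)
  constructor
  · intro hw
    rw [residual, Set.mem_setOf_eq, ← hL] at hw
    obtain ⟨p, μ, hsteps, hfinal⟩ := hw
    obtain ⟨c', h1, h2⟩ := steps_split hsteps
    have hc' : c' = (q, cKW K u) := steps_unique hdet h1 hu
    subst hc'
    obtain ⟨μ', hsteps', _⟩ := steps_transfer hdet hstrict hmax hreg h2
    rw [residual, Set.mem_setOf_eq, ← hL]
    exact ⟨p, μ', steps_append hv hsteps', hfinal⟩
  · intro hw
    rw [residual, Set.mem_setOf_eq, ← hL] at hw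
    obtain ⟨p, μ, hsteps, hfinal⟩ := hw
    obtain ⟨c', h1, h2⟩ := steps_split hsteps
    have hc' : c' = (q, cKW K v) := steps_unique hdet h1 hv
    subst hc'
    obtain ⟨μ', hsteps', _⟩ := steps_transfer hdet hstrict hmax hreg.symm h2
    rw [tauWAux_inv hreg] at hsteps'
    rw [residual, Set.mem_setOf_eq, ← hL]
    exact ⟨p, μ', steps_append hu hsteps', hfinal⟩

lemma approx_append_tau {A : Type} {L : Set (TimedWord A)} {K : ℕ} {u v : TimedWord A}
    (h : ApproxLK L K u v) (t : ℝ≥0) (a : A) :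
    ApproxLK L K (u ++ [(t, a)]) (v ++ [(tauStep K (cKW K u) (cKW K v) t, a)]) := by
  set x := cKW K u with hx
  set x' := cKW K v with hx'
  set t' := tauStep K x x' t with ht'
  have hreg1 : RegEq K (cKW K (u ++ [(t, a)])) (cKW K (v ++ [(t', a)])) := by
    rw [cKW_append, cKW_append]
    exact regEq_next h.1 t
  refine approx_of_iff hreg1 (fun w => ?_)
  have e1 : w ∈ residual L (u ++ [(t, a)]) ↔ (t, a) :: w ∈ residual L u := by
    simp [residual, List.append_assoc]
  rw [cKW_append, cKW_append, e1, approx_mem_iff h ((t, a) :: w)]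
  simp only [tauWAux]
  simp [residual, List.append_assoc]
  exact Iff.rfl

lemma sameState_ext {A : Type} {K : ℕ} {B : TA A} (hB : IsKAcceptor B K)
    (v : TimedWord A) (t₁ t₂ : ℝ≥0) (a : A)
    (hreg : RegEq K (cKW K v + t₁) (cKW K v + t₂)) :
    B.SameState (v ++ [(t₁, a)]) (v ++ [(t₂, a)]) := by
  obtain ⟨hfin, hcomp, hdet, hirta, hstrict, hmax, hacc⟩ := hB
  obtain ⟨⟨qv, νv⟩, hrv⟩ := hcomp v
  have hν : νv = cKW K v := steps_clock hstrict hmax hrv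
  subst hν
  obtain ⟨⟨p1, μ1⟩, h1⟩ := hcomp (v ++ [(t₁, a)])
  obtain ⟨c1, h1a, h1b⟩ := steps_split h1
  have hc1 : c1 = (qv, cKW K v) := steps_unique hdet h1a hrv
  subst hc1
  cases h1b with
  | cons θ hθ hsrc hlab hg hrest =>
    have hsat : θ.guard.sat (cKW K v + t₂) :=
      guard_regEq (hstrict θ hθ).1 (hmax θ hθ) hreg hg
    refine ⟨θ.dst, _, _,
      steps_append hrv (Steps.cons θ hθ hsrc hlab hg (Steps.nil _)),
      steps_append hrv (Steps.cons θ hθ hsrc hlab hsat (Steps.nil _))⟩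

lemma approx_kmono {A : Type} {K : ℕ} {L : Set (TimedWord A)} {B : TA A}
    (hB : IsKAcceptor B K) (hL : B.Lang = L) : KMonotonic K (ApproxLK L K) := by
  intro u v huv
  refine ⟨huv.1, ?_⟩
  intro a t t' hreg2
  set t'' := tauStep K (cKW K u) (cKW K v) t with ht''
  have step1 : ApproxLK L K (u ++ [(t, a)]) (v ++ [(t'', a)]) := approx_append_tau huv t a
  have hreg3 : RegEq K (cKW K v + t'') (cKW K v + t') :=
    (regEq_add huv.1 t).symm.trans hreg2
  have step2 : ApproxLK L K (v ++ [(t'', a)]) (v ++ [(t', a)]) :=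
    sameState_approx hB hL (sameState_ext hB v t'' t' a hreg3)
  exact approx_trans step1 step2

lemma approx_coarsest {A : Type} {K : ℕ} {L : Set (TimedWord A)}
    (r : TimedWord A → TimedWord A → Prop) (hequiv : Equivalence r)
    (hKm : KMonotonic K r) (hLp : LPreserving L r) {u v : TimedWord A} (huv : r u v) :
    ApproxLK L K u v := by
  have key : ∀ w : TimedWord A, ∀ u v : TimedWord A, r u v →
      ((u ++ w ∈ L) ↔ (v ++ tauWAux K (cKW K u) (cKW K v) w ∈ L)) := by
    intro w
    induction w with
    | nil =>
      intro u v huv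
      simpa [tauWAux] using hLp u v huv
    | cons e w ih =>
      obtain ⟨t, a⟩ := e
      intro u v huv
      have hreg := (hKm u v huv).1
      set t' := tauStep K (cKW K u) (cKW K v) t with ht'
      have hnext : r (u ++ [(t, a)]) (v ++ [(t', a)]) :=
        (hKm u v huv).2 a t t' (regEq_add hreg t)
      have ih' := ih _ _ hnext
      rw [cKW_append, cKW_append] at ih'
      simp only [tauWAux]
      rw [show u ++ (t, a) :: w = (u ++ [(t, a)]) ++ w by simp,
        show v ++ (t', a) :: tauWAux K (resetStep K (cKW K u + t))
            (resetStep K (cKW K v + t')) w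
          = (v ++ [(t', a)]) ++ tauWAux K (resetStep K (cKW K u + t))
            (resetStep K (cKW K v + t')) w by simp]
      exact ih'
  have hreg := (hKm u v huv).1
  refine approx_of_iff hreg (fun w => ?_)
  exact key w u v huv

lemma approx_finiteIndex {A : Type} {K : ℕ} {L : Set (TimedWord A)} {B : TA A}
    (hB : IsKAcceptor B K) (hL : B.Lang = L) : FiniteIndex (ApproxLK L K) := by
  classical
  obtain ⟨hfin, hcomp, hdet, -, -, -, -⟩ := id hB
  haveI : Finite B.Q := hfin.1
  set stateOf : TimedWord A → B.Q := fun u => ((hcomp u).choose).1 with hstate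
  have hrun : ∀ u : TimedWord A,
      Steps B (B.init, 0) u (stateOf u, ((hcomp u).choose).2) := by
    intro u
    have h := (hcomp u).choose_spec
    rwa [← Prod.mk.eta (p := (hcomp u).choose)] at h
  have happrox : ∀ u w : TimedWord A, stateOf u = stateOf w → ApproxLK L K u w := by
    intro u w h
    refine sameState_approx hB hL
      ⟨stateOf u, ((hcomp u).choose).2, ((hcomp w).choose).2, hrun u, ?_⟩
    rw [h]
    exact hrun w
  have hcls : ∀ u w : TimedWord A, stateOf u = stateOf w →
      {z : TimedWord A | ApproxLK L K u z} = {z : TimedWord A | ApproxLK L K w z} := by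
    intro u w h
    ext z
    simp only [Set.mem_setOf_eq]
    exact ⟨fun hz => approx_trans (approx_symm (happrox u w h)) hz,
      fun hz => approx_trans (happrox u w h) hz⟩
  set F : B.Q → Set (TimedWord A) := fun q =>
    if h : ∃ u : TimedWord A, stateOf u = q then
      {z : TimedWord A | ApproxLK L K h.choose z} else ∅ with hF
  have hFu : ∀ u : TimedWord A, {z : TimedWord A | ApproxLK L K u z} = F (stateOf u) := by
    intro u
    have hex : ∃ w : TimedWord A, stateOf w = stateOf u := ⟨u, rfl⟩
    rw [show F (stateOf u) = {z : TimedWord A | ApproxLK L K hex.choose z} from dif_pos hex]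
    exact hcls u hex.choose hex.choose_spec.symm
  refine Set.Finite.subset (Set.finite_range F) ?_
  rintro S ⟨u, rfl⟩
  exact ⟨stateOf u, (hFu u).symm⟩

/-- for `L` definable by a `K`-acceptor, `≈^{L,K}` has finite index,
is `K`-monotonic, and is the coarsest `K`-monotonic `L`-preserving equivalence. -/
theorem statement12 {A : Type} [Finite A] (K : ℕ) (L : Set (TimedWord A))
    (B : TA A) (hB : IsKAcceptor B K) (hL : B.Lang = L) :
    FiniteIndex (ApproxLK L K) ∧ KMonotonic K (ApproxLK L K) ∧
      ∀ r : TimedWord A → TimedWord A → Prop,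
        Equivalence r → KMonotonic K r → LPreserving L r →
          ∀ u v : TimedWord A, r u v → ApproxLK L K u v := by
  exact ⟨approx_finiteIndex hB hL, approx_kmono hB hL,
    fun r hequiv hKm hLp u v huv => approx_coarsest r hequiv hKm hLp huv⟩

end IRTA
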